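/- arXiv:2006.15077 — 5 statements merged into one kernel-verified Lean document; each statement's English description precedes it below -/
import Mathlib

section
/- Let n0, n1 ≥ 1 be natural numbers, n := n0 + n1, and let t be an odd natural number. Then the number of binary sequences x in B_{n0,n1} with τ(x) = t satisfies 2·n0·n1·|{x ∈ B_{n0,n1} : τ(x) = t}| = (t+1)² · C(n0, (t+1)/2) · C(n1, (t+1)/2), where C(a,b) denotes the binomial coefficient. -/
/-- The number of jumps `τ(x) = |{i ∈ [n-1] : x_i ≠ x_{i+1}}|` of a binary sequence
`x ∈ {0,1}^n`. -/
def tau {n : ℕ} (x : Fin n → Bool) : ℕ :=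
  (Finset.univ.filter (fun i : Fin n =>
    ∃ h : (i : ℕ) + 1 < n, x i ≠ x ⟨(i : ℕ) + 1, h⟩)).card

/-- `B_{n0,n1}`, the set of binary sequences of length `n0 + n1` with exactly
`n0` zeros and `n1` ones. -/
def Bseq (n0 n1 : ℕ) : Finset (Fin (n0 + n1) → Bool) :=
  Finset.univ.filter (fun x =>
    (Finset.univ.filter (fun i => x i = false)).card = n0 ∧
    (Finset.univ.filter (fun i => x i = true)).card = n1)

def cnt {n : ℕ} (b : Bool) (x : Fin n → Bool) : ℕ :=
  (Finset.univ.filter (fun i => x i = b)).card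

lemma tau_eq_sum {n : ℕ} (x : Fin n → Bool) :
    tau x = ∑ i : Fin n, if h : (i : ℕ) + 1 < n then (if x i ≠ x ⟨(i : ℕ) + 1, h⟩ then 1 else 0) else 0 := by
  unfold tau
  rw [Finset.card_filter]
  apply Finset.sum_congr rfl
  intro i _
  by_cases h : (i : ℕ) + 1 < n
  · rw [dif_pos h]
    congr 1
    exact propext ⟨fun ⟨_, hx⟩ => hx, fun hx => ⟨h, hx⟩⟩
  · rw [dif_neg h, if_neg]
    rintro ⟨h', _⟩; exact h h'

lemma cnt_cons {n : ℕ} (b c : Bool) (y : Fin n → Bool) :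
    cnt c (Fin.cons b y) = (if b = c then 1 else 0) + cnt c y := by
  unfold cnt
  rw [Finset.card_filter, Finset.card_filter, Fin.sum_univ_succ]
  simp [Fin.cons_succ]

lemma tau_cons {n : ℕ} (b : Bool) (y : Fin (n+1) → Bool) :
    tau (Fin.cons b y) = (if b ≠ y 0 then 1 else 0) + tau y := by
  rw [tau_eq_sum, tau_eq_sum, Fin.sum_univ_succ]
  congr 1
  · apply Finset.sum_congr rfl
    intro j _
    by_cases h : (j : ℕ) + 1 < n + 1
    · have h2 : ((Fin.succ j : Fin (n+2)) : ℕ) + 1 < n + 2 := by simp; omega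
      rw [dif_pos h2, dif_pos h]
      have e2 : (⟨((Fin.succ j : Fin (n+2)) : ℕ) + 1, h2⟩ : Fin (n+2)) = Fin.succ ⟨(j:ℕ)+1, h⟩ := rfl
      rw [e2, Fin.cons_succ, Fin.cons_succ]
    · have h2 : ¬ (((Fin.succ j : Fin (n+2)) : ℕ) + 1 < n + 2) := by simp; omega
      rw [dif_neg h2, dif_neg h]

def comp : ℕ → ℕ → ℕ
  | 0, 0 => 1
  | 0, _+1 => 0
  | _+1, 0 => 0
  | m+1, j+1 => Nat.choose m j

@[simp] lemma comp_zero_zero : comp 0 0 = 1 := rfl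
@[simp] lemma comp_zero_succ (j : ℕ) : comp 0 (j+1) = 0 := rfl
@[simp] lemma comp_succ_zero (m : ℕ) : comp (m+1) 0 = 0 := rfl
@[simp] lemma comp_succ_succ (m j : ℕ) : comp (m+1) (j+1) = Nat.choose m j := rfl

lemma comp_pascal (m j : ℕ) : comp (m+1) (j+1) = comp m (j+1) + comp m j := by
  match m, j with
  | 0, 0 => rfl
  | 0, j+1 => simp
  | m+1, 0 => simp
  | m+1, j+1 => simp [Nat.choose_succ_succ]; omega

lemma card_filter_split {α : Type*} (s : Finset α) (p R : α → Prop) [DecidablePred p] [DecidablePred R] :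
    (s.filter R).card = (s.filter (fun a => p a ∧ R a)).card + (s.filter (fun a => ¬ p a ∧ R a)).card := by
  rw [← Finset.card_filter_add_card_filter_not (p := p) (s := s.filter R),
    Finset.filter_filter, Finset.filter_filter]
  congr 1 <;> · congr 1; ext a; simp only [Finset.mem_filter]; tauto

lemma card_head_cons {n : ℕ} (b : Bool) (C : (Fin (n+2) → Bool) → Prop) [DecidablePred C] :
    ((Finset.univ : Finset (Fin (n+2) → Bool)).filter (fun x => x 0 = b ∧ C x)).card
      = ((Finset.univ : Finset (Fin (n+1) → Bool)).filter (fun y => C (Fin.cons b y))).card := by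
  refine Finset.card_nbij' (fun x => Fin.tail x) (fun y => Fin.cons b y) ?_ ?_ ?_ ?_
  · intro x hx
    simp only [Finset.mem_coe, Finset.mem_filter, Finset.mem_univ, true_and] at hx ⊢
    have hc : Fin.cons b (Fin.tail x) = x := by
      rw [← hx.1]; exact Fin.cons_self_tail x
    rw [hc]; exact hx.2
  · intro y hy
    simp only [Finset.mem_coe, Finset.mem_filter, Finset.mem_univ, true_and] at hy ⊢
    exact ⟨by simp, hy⟩
  · intro x hx
    simp only [Finset.mem_coe, Finset.mem_filter, Finset.mem_univ, true_and] at hx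
    rw [← hx.1]; exact Fin.cons_self_tail x
  · intro y _
    funext i
    simp [Fin.tail]

lemma card_congr' {α : Type*} {s : Finset α} {p q : α → Prop}
    [DecidablePred p] [DecidablePred q] (h : ∀ a, p a ↔ q a) :
    (s.filter p).card = (s.filter q).card := by
  congr 1
  apply Finset.filter_congr
  intro a _
  exact h a

lemma key : ∀ (n z o t : ℕ) (b : Bool), z + o = n + 1 →
    ((Finset.univ : Finset (Fin (n+1) → Bool)).filter
      (fun x => x 0 = b ∧ cnt false x = z ∧ cnt true x = o ∧ tau x = t)).card
    = comp (cond b o z) (t/2+1) * comp (cond b z o) ((t+1)/2) := by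
  intro n
  induction n with
  | zero =>
    intro z o t b h
    have htau : ∀ x : Fin 1 → Bool, tau x = 0 := by
      intro x
      rw [tau_eq_sum]
      apply Finset.sum_eq_zero
      intro i _
      have := i.isLt
      rw [dif_neg (by omega)]
    have hcnt : ∀ (c : Bool) (x : Fin 1 → Bool), cnt c x = if x 0 = c then 1 else 0 := by
      intro c x
      unfold cnt
      rw [Finset.card_filter, Fin.sum_univ_one]
    rw [Finset.card_filter, ← Equiv.sum_comp (Equiv.funUnique (Fin 1) Bool).symm, Fintype.sum_bool]
    have hval : ∀ c : Bool, (Equiv.funUnique (Fin 1) Bool).symm c 0 = c := fun c => rfl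
    simp only [htau, hcnt, hval]
    have hc0 : ∀ j : ℕ, j ≠ 0 → comp 0 j = 0 := by
      intro j hj
      rcases j with _ | j
      · exact absurd rfl hj
      · rfl
    rcases b <;> rcases t with _ | t' <;> simp_all
    · rcases z with _ | z
      · have ho : o = 1 := by omega
        subst ho; simp
      · have ho : o = 0 := by omega
        have hz : z = 0 := by omega
        subst ho; subst hz; simp
    · rcases z with _ | z
      · exact Or.inl (hc0 _ (by omega))
      · have ho : o = 0 := by omega
        subst ho
        exact Or.inr (hc0 _ (by omega))
    · rcases o with _ | o
      · have hz : z = 1 := by omega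
        subst hz; simp
      · have hz : z = 0 := by omega
        have ho : o = 0 := by omega
        subst hz; subst ho; simp
    · rcases o with _ | o
      · exact Or.inl (hc0 _ (by omega))
      · have hz : z = 0 := by omega
        subst hz
        exact Or.inr (hc0 _ (by omega))
  | succ n ih =>
    intro z o t b h
    rw [card_head_cons b (fun x => cnt false x = z ∧ cnt true x = o ∧ tau x = t)]
    simp only [cnt_cons, tau_cons]
    rw [card_filter_split (Finset.univ) (fun y => y 0 = b)]
    have eA : ∀ y : Fin (n+1) → Bool,
        (y 0 = b ∧ (if b = false then 1 else 0) + cnt false y = z ∧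
          (if b = true then 1 else 0) + cnt true y = o ∧ (if b ≠ y 0 then 1 else 0) + tau y = t)
        ↔ (y 0 = b ∧ (if b = false then 1 else 0) + cnt false y = z ∧
          (if b = true then 1 else 0) + cnt true y = o ∧ tau y = t) := by
      intro y
      constructor
      · rintro ⟨h0, h1, h2, h3⟩
        refine ⟨h0, h1, h2, ?_⟩
        rw [h0, if_neg (by simp)] at h3
        omega
      · rintro ⟨h0, h1, h2, h3⟩
        refine ⟨h0, h1, h2, ?_⟩
        rw [h0, if_neg (by simp)]
        omega
    have eB : ∀ y : Fin (n+1) → Bool,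
        (¬ y 0 = b ∧ (if b = false then 1 else 0) + cnt false y = z ∧
          (if b = true then 1 else 0) + cnt true y = o ∧ (if b ≠ y 0 then 1 else 0) + tau y = t)
        ↔ (y 0 = !b ∧ (if b = false then 1 else 0) + cnt false y = z ∧
          (if b = true then 1 else 0) + cnt true y = o ∧ 1 + tau y = t) := by
      intro y
      constructor
      · rintro ⟨h0, h1, h2, h3⟩
        have h0' : y 0 = !b := by cases b <;> cases hy : y 0 <;> simp_all
        refine ⟨h0', h1, h2, ?_⟩
        rw [h0', if_pos (by cases b <;> simp)] at h3
        omega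
      · rintro ⟨h0, h1, h2, h3⟩
        refine ⟨by rw [h0]; cases b <;> simp, h1, h2, ?_⟩
        rw [h0, if_pos (by cases b <;> simp)]
        omega
    rw [card_congr' eA, card_congr' eB]
    clear eA eB
    rcases b with _ | _
    · -- b = false
      rcases z with _ | z'
      · have e0 : ∀ y : Fin (n+1) → Bool,
            (y 0 = false ∧ (if (false : Bool) = false then 1 else 0) + cnt false y = 0 ∧
              (if (false : Bool) = true then 1 else 0) + cnt true y = o ∧ tau y = t) ↔ False := by
          refine fun y => ⟨fun hy => ?_, False.elim⟩
          have h1 := hy.2.1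
          simp at h1
        have e0' : ∀ y : Fin (n+1) → Bool,
            (y 0 = !false ∧ (if (false : Bool) = false then 1 else 0) + cnt false y = 0 ∧
              (if (false : Bool) = true then 1 else 0) + cnt true y = o ∧ 1 + tau y = t) ↔ False := by
          refine fun y => ⟨fun hy => ?_, False.elim⟩
          have h1 := hy.2.1
          simp at h1
        rw [card_congr' e0, card_congr' e0']
        simp
      · have h' : z' + o = n + 1 := by omega
        have eA2 : ∀ y : Fin (n+1) → Bool,
            (y 0 = false ∧ (if (false : Bool) = false then 1 else 0) + cnt false y = z' + 1 ∧
              (if (false : Bool) = true then 1 else 0) + cnt true y = o ∧ tau y = t) ↔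
            (y 0 = false ∧ cnt false y = z' ∧ cnt true y = o ∧ tau y = t) :=
          fun y => and_congr_right (fun _ => by simp only [reduceIte, Bool.false_eq_true, Bool.true_eq_false, if_false]; omega)
        rw [card_congr' eA2, ih z' o t false h']
        rcases t with _ | t'
        · have eB0 : ∀ y : Fin (n+1) → Bool,
              (y 0 = !false ∧ (if (false : Bool) = false then 1 else 0) + cnt false y = z' + 1 ∧
                (if (false : Bool) = true then 1 else 0) + cnt true y = o ∧ 1 + tau y = 0) ↔ False := by
            refine fun y => ⟨fun hy => ?_, False.elim⟩
            have h1 := hy.2.2.2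
            omega
          rw [card_congr' eB0]
          simp only [Finset.filter_false, Finset.card_empty, Bool.cond_false, add_zero]
          norm_num
          rcases o with _ | o'
          · have hz : z' = n + 1 := by omega
            rcases z' with _ | z''
            · omega
            · simp
          · simp
        · have eB2 : ∀ y : Fin (n+1) → Bool,
              (y 0 = !false ∧ (if (false : Bool) = false then 1 else 0) + cnt false y = z' + 1 ∧
                (if (false : Bool) = true then 1 else 0) + cnt true y = o ∧ 1 + tau y = t' + 1) ↔
              (y 0 = true ∧ cnt false y = z' ∧ cnt true y = o ∧ tau y = t') := by
            intro y
            simp only [Bool.not_false]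
            exact and_congr_right (fun _ => by simp only [reduceIte, Bool.false_eq_true, Bool.true_eq_false, if_false]; omega)
          rw [card_congr' eB2, ih z' o t' true h']
          simp only [Bool.cond_false, Bool.cond_true]
          rw [comp_pascal]
          have d1 : (t' + 1 + 1) / 2 = t' / 2 + 1 := by omega
          rw [d1]
          ring
    · -- b = true
      rcases o with _ | o'
      · have e0 : ∀ y : Fin (n+1) → Bool,
            (y 0 = true ∧ (if (true : Bool) = false then 1 else 0) + cnt false y = z ∧
              (if (true : Bool) = true then 1 else 0) + cnt true y = 0 ∧ tau y = t) ↔ False := by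
          refine fun y => ⟨fun hy => ?_, False.elim⟩
          have h1 := hy.2.2.1
          simp at h1
        have e0' : ∀ y : Fin (n+1) → Bool,
            (y 0 = !true ∧ (if (true : Bool) = false then 1 else 0) + cnt false y = z ∧
              (if (true : Bool) = true then 1 else 0) + cnt true y = 0 ∧ 1 + tau y = t) ↔ False := by
          refine fun y => ⟨fun hy => ?_, False.elim⟩
          have h1 := hy.2.2.1
          simp at h1
        rw [card_congr' e0, card_congr' e0']
        simp
      · have h' : z + o' = n + 1 := by omega
        have eA2 : ∀ y : Fin (n+1) → Bool,
            (y 0 = true ∧ (if (true : Bool) = false then 1 else 0) + cnt false y = z ∧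
              (if (true : Bool) = true then 1 else 0) + cnt true y = o' + 1 ∧ tau y = t) ↔
            (y 0 = true ∧ cnt false y = z ∧ cnt true y = o' ∧ tau y = t) :=
          fun y => and_congr_right (fun _ => by simp only [reduceIte, Bool.false_eq_true, Bool.true_eq_false, if_false]; omega)
        rw [card_congr' eA2, ih z o' t true h']
        rcases t with _ | t'
        · have eB0 : ∀ y : Fin (n+1) → Bool,
              (y 0 = !true ∧ (if (true : Bool) = false then 1 else 0) + cnt false y = z ∧
                (if (true : Bool) = true then 1 else 0) + cnt true y = o' + 1 ∧ 1 + tau y = 0) ↔ False := by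
            refine fun y => ⟨fun hy => ?_, False.elim⟩
            have h1 := hy.2.2.2
            omega
          rw [card_congr' eB0]
          simp only [Finset.filter_false, Finset.card_empty, Bool.cond_true, add_zero]
          norm_num
          rcases z with _ | z''
          · have ho : o' = n + 1 := by omega
            rcases o' with _ | o''
            · omega
            · simp
          · simp
        · have eB2 : ∀ y : Fin (n+1) → Bool,
              (y 0 = !true ∧ (if (true : Bool) = false then 1 else 0) + cnt false y = z ∧
                (if (true : Bool) = true then 1 else 0) + cnt true y = o' + 1 ∧ 1 + tau y = t' + 1) ↔
              (y 0 = false ∧ cnt false y = z ∧ cnt true y = o' ∧ tau y = t') := by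
            intro y
            simp only [Bool.not_true]
            exact and_congr_right (fun _ => by simp only [reduceIte, Bool.false_eq_true, Bool.true_eq_false, if_false]; omega)
          rw [card_congr' eB2, ih z o' t' false h']
          simp only [Bool.cond_false, Bool.cond_true]
          rw [comp_pascal]
          have d1 : (t' + 1 + 1) / 2 = t' / 2 + 1 := by omega
          rw [d1]
          ring

theorem stmt_0 (n0 n1 t : ℕ) (h0 : 1 ≤ n0) (h1 : 1 ≤ n1) (ht : Odd t) :
    2 * n0 * n1 * ((Bseq n0 n1).filter (fun x => tau x = t)).card =
      (t + 1) ^ 2 * Nat.choose n0 ((t + 1) / 2) * Nat.choose n1 ((t + 1) / 2) := by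
  obtain ⟨m0, rfl⟩ : ∃ m0, n0 = m0 + 1 := ⟨n0 - 1, by omega⟩
  obtain ⟨m1, rfl⟩ : ∃ m1, n1 = m1 + 1 := ⟨n1 - 1, by omega⟩
  have main : ∀ t' : ℕ, ((Bseq (m0+1) (m1+1)).filter (fun x => tau x = t')).card
      = comp (m0+1) (t'/2+1) * comp (m1+1) ((t'+1)/2)
        + comp (m1+1) (t'/2+1) * comp (m0+1) ((t'+1)/2) := by
    intro t'
    unfold Bseq
    rw [Finset.filter_filter]
    show ((Finset.univ : Finset (Fin ((m0+1+m1)+1) → Bool)).filter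
      (fun x => (cnt false x = m0+1 ∧ cnt true x = m1+1) ∧ tau x = t')).card = _
    rw [card_filter_split (Finset.univ) (fun x => x 0 = false)]
    have e1 : ∀ x : Fin ((m0+1+m1)+1) → Bool,
        (x 0 = false ∧ (cnt false x = m0+1 ∧ cnt true x = m1+1) ∧ tau x = t') ↔
        (x 0 = false ∧ cnt false x = m0+1 ∧ cnt true x = m1+1 ∧ tau x = t') := fun x => by tauto
    have e2 : ∀ x : Fin ((m0+1+m1)+1) → Bool,
        (¬ x 0 = false ∧ (cnt false x = m0+1 ∧ cnt true x = m1+1) ∧ tau x = t') ↔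
        (x 0 = true ∧ cnt false x = m0+1 ∧ cnt true x = m1+1 ∧ tau x = t') := fun x => by
      cases hx : x 0 <;> simp [hx] <;> tauto
    rw [card_congr' e1, card_congr' e2]
    rw [key (m0+1+m1) (m0+1) (m1+1) t' false (by omega),
      key (m0+1+m1) (m0+1) (m1+1) t' true (by omega)]
    simp only [Bool.cond_false, Bool.cond_true]
  rw [main t]
  obtain ⟨j, hj⟩ := ht
  have d1 : t / 2 + 1 = j + 1 := by omega
  have d2 : (t + 1) / 2 = j + 1 := by omega
  have d3 : t + 1 = 2 * (j + 1) := by omega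
  rw [d1, d2, d3]
  simp only [comp_succ_succ]
  have e0 := Nat.add_one_mul_choose_eq m0 j
  have e1 := Nat.add_one_mul_choose_eq m1 j
  calc 2 * (m0 + 1) * (m1 + 1) *
        (Nat.choose m0 j * Nat.choose m1 j + Nat.choose m1 j * Nat.choose m0 j)
      = 4 * ((m0 + 1) * Nat.choose m0 j) * ((m1 + 1) * Nat.choose m1 j) := by ring
    _ = 4 * (Nat.choose (m0+1) (j+1) * (j+1)) * (Nat.choose (m1+1) (j+1) * (j+1)) := by
        rw [e0, e1]
    _ = (2 * (j+1)) ^ 2 * Nat.choose (m0+1) (j+1) * Nat.choose (m1+1) (j+1) := by ring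
end

section
/- Let m ≥ 1 be a natural number. Then for every natural number a, |{x ∈ B_{m,m} : τ(x) = m + a}| = |{x ∈ B_{m,m} : τ(x) = m − a}|. Equivalently, if X is sampled uniformly at random from B_{m,m}, then P(τ(X) = m + a) = P(τ(X) = m − a) for all a ∈ ℕ. -/
namespace Stmt6
open List

def tauL : List Bool → ℕ
  | [] => 0
  | [_] => 0
  | a :: b :: t => (if a = b then 0 else 1) + tauL (b :: t)

def compOf : List Bool → List ℕ
  | [] => [1]
  | true :: w => (compOf w).modifyHead (· + 1)
  | false :: w => 1 :: compOf w

def wordOf : List ℕ → List Bool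
  | [] => []
  | [a] => List.replicate (a - 1) true
  | a :: b :: t => List.replicate (a - 1) true ++ false :: wordOf (b :: t)

def compl' (L : List ℕ) : List ℕ := compOf ((wordOf L).map not)

def build : Bool → List ℕ → List Bool
  | _, [] => []
  | s, a :: R => List.replicate a s ++ build (!s) R

def runs : List Bool → List ℕ
  | [] => []
  | [_] => [1]
  | a :: b :: t => if a = b then (runs (b :: t)).modifyHead (· + 1) else 1 :: runs (b :: t)

def ev : List α → List α
  | [] => []
  | [a] => [a]
  | a :: _ :: t => a :: ev t

def od (l : List α) : List α := ev l.tail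

def il : List α → List α → List α
  | [], B => B
  | a :: A, B => a :: il B A
termination_by A B => A.length + B.length
decreasing_by simp_wf; omega

def phiL (l : List Bool) : List Bool :=
  if (ev (runs l)).length = (od (runs l)).length then
    build l.head! (il (compl' (ev (runs l))) (compl' (od (runs l))))
  else
    build (!l.head!) (il (compl' (od (runs l))) (compl' (ev (runs l))))

/- ### ev / od / il -/

@[simp] lemma ev_nil : ev ([] : List α) = [] := rfl
@[simp] lemma od_nil : od ([] : List α) = [] := rfl
@[simp] lemma od_cons (a : α) (t : List α) : od (a :: t) = ev t := rfl
lemma ev_cons (a : α) (t : List α) : ev (a :: t) = a :: od t := by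
  cases t <;> rfl

@[simp] lemma il_nil (B : List α) : il [] B = B := by simp [il]
@[simp] lemma il_cons (a : α) (A B : List α) : il (a :: A) B = a :: il B A := by
  rw [il]

lemma il_ev_od : ∀ l : List α, il (ev l) (od l) = l := by
  intro l; induction l with
  | nil => simp
  | cons a t ih => rw [ev_cons, od_cons, il_cons, ih]

lemma ev_od_il : ∀ n (A B : List α), A.length + B.length ≤ n →
    B.length ≤ A.length → A.length ≤ B.length + 1 →
    ev (il A B) = A ∧ od (il A B) = B := by
  intro n
  induction n with
  | zero =>
    intro A B h1 _ _
    have : A = [] := by cases A <;> simp_all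
    have : B = [] := by cases B <;> simp_all
    simp_all
  | succ n ih =>
    intro A B h1 h2 h3
    cases A with
    | nil =>
      have : B = [] := by cases B <;> simp_all
      simp_all
    | cons a A' =>
      rw [il_cons, ev_cons, od_cons]
      have := ih B A' (by simp at h1 ⊢; omega) (by simp at h3 ⊢; omega)
        (by simp at h2 ⊢; omega)
      exact ⟨by rw [this.2], this.1⟩

lemma sum_il : ∀ (A B : List ℕ), (il A B).sum = A.sum + B.sum := by
  intro A B
  induction A, B using il.induct with
  | case1 B => simp
  | case2 a A B ih => simp [ih]; omega

lemma length_il : ∀ (A B : List α), (il A B).length = A.length + B.length := by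
  intro A B
  induction A, B using il.induct with
  | case1 B => simp
  | case2 a A B ih => simp [ih]; omega

lemma mem_il : ∀ (A B : List α), ∀ x ∈ il A B, x ∈ A ∨ x ∈ B := by
  intro A B
  induction A, B using il.induct with
  | case1 B => simp
  | case2 a A B ih =>
    intro x hx
    rw [il_cons] at hx
    rcases List.mem_cons.mp hx with h | h
    · simp [h]
    · rcases ih x h with h | h <;> simp [h]

lemma length_ev_od : ∀ l : List α,
    (ev l).length = (l.length + 1) / 2 ∧ (od l).length = l.length / 2 := by
  intro l
  induction l with
  | nil => simp
  | cons a t ih =>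
    rw [ev_cons, od_cons]
    constructor
    · simp [ih.2]; omega
    · simp at ih ⊢; omega

lemma ev_ne_nil {l : List α} (h : l ≠ []) : ev l ≠ [] := by
  cases l with
  | nil => simp at h
  | cons a t => rw [ev_cons]; simp

lemma mem_ev : ∀ l : List α, ∀ x ∈ ev l, x ∈ l := by
  intro l
  induction l using ev.induct with
  | case1 => simp
  | case2 a => intro x hx; rw [show ev [a] = [a] from rfl] at hx; simpa using hx
  | case3 a b t ih =>
    intro x hx
    rw [show ev (a :: b :: t) = a :: ev t from rfl] at hx
    rcases List.mem_cons.mp hx with h | h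
    · simp [h]
    · have := ih x h; simp [this]

lemma mem_od : ∀ l : List α, ∀ x ∈ od l, x ∈ l := by
  intro l x hx
  cases l with
  | nil => simp at hx
  | cons a t => exact mem_cons_of_mem a (mem_ev t x hx)

/- ### compOf / wordOf -/

lemma compOf_struct : ∀ w : List Bool, ∃ a t, compOf w = (a + 1) :: t := by
  intro w
  induction w with
  | nil => exact ⟨0, [], rfl⟩
  | cons b w ih =>
    obtain ⟨a, t, h⟩ := ih
    cases b with
    | true => exact ⟨a + 1, t, by rw [compOf, h]; rfl⟩
    | false => exact ⟨0, compOf w, rfl⟩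

lemma compOf_ne_nil (w : List Bool) : compOf w ≠ [] := by
  obtain ⟨a, t, h⟩ := compOf_struct w; simp [h]

lemma sum_compOf : ∀ w : List Bool, (compOf w).sum = w.length + 1 := by
  intro w
  induction w with
  | nil => rfl
  | cons b w ih =>
    obtain ⟨a, t, h⟩ := compOf_struct w
    cases b with
    | true => rw [compOf, h]; rw [h] at ih; simp at ih ⊢; omega
    | false => rw [compOf]; simp [ih]; omega

lemma length_compOf : ∀ w : List Bool, (compOf w).length = w.count false + 1 := by
  intro w
  induction w with
  | nil => rfl
  | cons b w ih =>
    obtain ⟨a, t, h⟩ := compOf_struct w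
    cases b with
    | true => rw [compOf, h]; rw [h] at ih; simp [List.count_cons] at ih ⊢; omega
    | false => rw [compOf]; simp [List.count_cons, ih]

lemma pos_compOf : ∀ w : List Bool, ∀ x ∈ compOf w, 0 < x := by
  intro w
  induction w with
  | nil => intro x hx; simp [compOf] at hx; omega
  | cons b w ih =>
    obtain ⟨a, t, h⟩ := compOf_struct w
    cases b with
    | true =>
      rw [compOf, h]
      intro x hx
      rcases List.mem_cons.mp (by simpa using hx) with h' | h'
      · omega
      · exact ih x (by rw [h]; exact List.mem_cons_of_mem _ h')
    | false =>
      rw [compOf]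
      intro x hx
      rcases List.mem_cons.mp hx with h' | h'
      · omega
      · exact ih x h'

lemma wordOf_succ : ∀ (a : ℕ) (t : List ℕ),
    wordOf ((a + 2) :: t) = true :: wordOf ((a + 1) :: t) := by
  intro a t
  cases t with
  | nil => simp [wordOf, List.replicate_succ]
  | cons b t => simp [wordOf, List.replicate_succ]

lemma wordOf_compOf : ∀ w : List Bool, wordOf (compOf w) = w := by
  intro w
  induction w with
  | nil => rfl
  | cons b w ih =>
    obtain ⟨a, t, h⟩ := compOf_struct w
    cases b with
    | true =>
      rw [compOf, h, List.modifyHead_cons]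
      rw [show a + 1 + 1 = a + 2 from rfl, wordOf_succ, ← h, ih]
    | false =>
      rw [compOf]
      have : wordOf (1 :: compOf w) = false :: wordOf (compOf w) := by
        obtain ⟨c, t', h'⟩ := compOf_struct w
        rw [h', wordOf]
        simp
      rw [this, ih]

lemma compOf_replicate_append : ∀ (k : ℕ) (w : List Bool),
    compOf (List.replicate k true ++ w) = (compOf w).modifyHead (· + k) := by
  intro k
  induction k with
  | zero =>
    intro w
    obtain ⟨a, t, h⟩ := compOf_struct w
    simp [h]
  | succ k ih =>
    intro w
    rw [List.replicate_succ, List.cons_append, compOf, ih]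
    obtain ⟨a, t, h⟩ := compOf_struct w
    rw [h]
    simp
    omega

lemma compOf_wordOf : ∀ L : List ℕ, L ≠ [] → (∀ x ∈ L, 0 < x) →
    compOf (wordOf L) = L := by
  intro L
  induction L using wordOf.induct with
  | case1 => simp
  | case2 a =>
    intro _ hpos
    have ha : 0 < a := hpos a (by simp)
    rw [wordOf, show List.replicate (a-1) true = List.replicate (a-1) true ++ [] by simp,
      compOf_replicate_append]
    show List.modifyHead _ [1] = [a]
    simp
    omega
  | case3 a b t ih =>
    intro _ hpos
    have ha : 0 < a := hpos a (by simp)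
    rw [wordOf, compOf_replicate_append, compOf,
      ih (by simp) (fun x hx => hpos x (List.mem_cons_of_mem _ hx))]
    simp
    omega

lemma count_false_wordOf : ∀ L : List ℕ, L ≠ [] →
    (wordOf L).count false + 1 = L.length := by
  intro L
  induction L using wordOf.induct with
  | case1 => simp
  | case2 a => intro _; simp [wordOf, List.count_replicate]
  | case3 a b t ih =>
    intro _
    rw [wordOf]
    have := ih (by simp)
    simp [List.count_append, List.count_cons, List.count_replicate] at this ⊢
    omega

lemma length_wordOf : ∀ L : List ℕ, L ≠ [] → (∀ x ∈ L, 0 < x) →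
    (wordOf L).length + 1 = L.sum := by
  intro L
  induction L using wordOf.induct with
  | case1 => simp
  | case2 a =>
    intro _ hpos
    have := hpos a (by simp)
    simp [wordOf]
    omega
  | case3 a b t ih =>
    intro _ hpos
    have ha := hpos a (by simp)
    have := ih (by simp) (fun x hx => hpos x (List.mem_cons_of_mem _ hx))
    rw [wordOf]
    simp at this ⊢
    omega

lemma count_bool (w : List Bool) : w.count false + w.count true = w.length := by
  induction w with
  | nil => rfl
  | cons b w ih => cases b <;> simp [List.count_cons] <;> omega

lemma count_false_map_not (w : List Bool) : (w.map not).count false = w.count true := by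
  induction w with
  | nil => rfl
  | cons b w ih => cases b <;> simp [List.count_cons, ih]

/- ### compl' -/

lemma compl'_ne_nil (L : List ℕ) : compl' L ≠ [] := compOf_ne_nil _

lemma pos_compl' (L : List ℕ) : ∀ x ∈ compl' L, 0 < x := pos_compOf _

lemma sum_compl' (L : List ℕ) (h : L ≠ []) (hpos : ∀ x ∈ L, 0 < x) :
    (compl' L).sum = L.sum := by
  rw [compl', sum_compOf]
  simp
  have := length_wordOf L h hpos
  omega

lemma length_compl' (L : List ℕ) (h : L ≠ []) (hpos : ∀ x ∈ L, 0 < x) :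
    (compl' L).length + L.length = L.sum + 1 := by
  rw [compl', length_compOf, count_false_map_not]
  have h1 := count_false_wordOf L h
  have h2 := length_wordOf L h hpos
  have h3 := count_bool (wordOf L)
  omega

lemma compl'_compl' (L : List ℕ) (h : L ≠ []) (hpos : ∀ x ∈ L, 0 < x) :
    compl' (compl' L) = L := by
  rw [compl', compl', wordOf_compOf, List.map_map]
  have hnn : (not ∘ not) = id := by funext x; simp
  rw [hnn, List.map_id]
  exact compOf_wordOf L h hpos

/- ### build / runs -/

lemma length_build : ∀ (R : List ℕ) (s : Bool), (build s R).length = R.sum := by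
  intro R
  induction R with
  | nil => intro s; rfl
  | cons a R ih => intro s; simp [build, ih]

lemma build_cons_pos (s : Bool) (a : ℕ) (R : List ℕ) :
    build s ((a + 1) :: R) = s :: (List.replicate a s ++ build (!s) R) := by
  simp [build, List.replicate_succ]

lemma build_struct (s : Bool) (R : List ℕ) (hne : R ≠ []) (hpos : ∀ x ∈ R, 0 < x) :
    ∃ t, build s R = s :: t := by
  cases R with
  | nil => simp at hne
  | cons a R =>
    have : 0 < a := hpos a (by simp)
    obtain ⟨b, rfl⟩ : ∃ b, a = b + 1 := ⟨a - 1, by omega⟩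
    exact ⟨_, build_cons_pos s b R⟩

lemma count_build : ∀ (R : List ℕ) (s : Bool),
    (build s R).count s = (ev R).sum ∧ (build s R).count (!s) = (od R).sum := by
  intro R
  induction R with
  | nil => intro s; simp [build]
  | cons a R ih =>
    intro s
    have h1 := (ih (!s)).1
    have h2 := (ih (!s)).2
    rw [Bool.not_not] at h2
    rw [build, ev_cons, od_cons]
    constructor
    · simp [List.count_append, List.count_replicate, h2]
    · simp [List.count_append, List.count_replicate, h1]

lemma tauL_replicate (a : ℕ) (s : Bool) : tauL (List.replicate a s) = 0 := by
  induction a with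
  | zero => rfl
  | succ a ih =>
    cases a with
    | zero => rfl
    | succ b =>
      rw [List.replicate_succ, List.replicate_succ, tauL]
      rw [List.replicate_succ] at ih
      simp [ih]

lemma tauL_replicate_append (s : Bool) (t : List Bool) (ht : t.head? = some (!s)) :
    ∀ a : ℕ, tauL (List.replicate (a + 1) s ++ t) = 1 + tauL t := by
  intro a
  induction a with
  | zero =>
    cases t with
    | nil => simp at ht
    | cons b t' =>
      simp at ht
      subst ht
      simp [List.replicate_succ, tauL]
  | succ a ih =>
    rw [List.replicate_succ, List.cons_append]
    have : List.replicate (a + 1) s ++ t = s :: (List.replicate a s ++ t) := by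
      simp [List.replicate_succ]
    rw [this, tauL, ← this, ih]
    simp

lemma tauL_build : ∀ (R : List ℕ) (s : Bool), R ≠ [] → (∀ x ∈ R, 0 < x) →
    tauL (build s R) + 1 = R.length := by
  intro R
  induction R with
  | nil => simp
  | cons a R ih =>
    intro s _ hpos
    have ha : 0 < a := hpos a (by simp)
    obtain ⟨b, rfl⟩ : ∃ b, a = b + 1 := ⟨a - 1, by omega⟩
    cases R with
    | nil =>
      rw [build, show build (!s) ([] : List ℕ) = [] from rfl, List.append_nil]
      simp [tauL_replicate]
    | cons c R' =>
      have hpos' : ∀ x ∈ c :: R', 0 < x := fun x hx => hpos x (List.mem_cons_of_mem _ hx)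
      obtain ⟨t, hbt⟩ := build_struct (!s) (c :: R') (by simp) hpos'
      rw [build, tauL_replicate_append s _ (by rw [hbt]; rfl)]
      have := ih (!s) (by simp) hpos'
      simp at this ⊢
      omega

lemma runs_ne_nil {l : List Bool} (h : l ≠ []) : runs l ≠ [] := by
  cases l with
  | nil => simp at h
  | cons a t =>
    cases t with
    | nil => simp [runs]
    | cons b t' =>
      rw [runs]
      by_cases hab : a = b
      · simp [hab]
        intro hc
        exact runs_ne_nil (l := b :: t') (by simp) (by simpa using hc)
      · simp [hab]

lemma pos_runs : ∀ l : List Bool, ∀ x ∈ runs l, 0 < x := by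
  intro l
  induction l with
  | nil => simp [runs]
  | cons a t ih =>
    cases t with
    | nil => intro x hx; rw [runs] at hx; simp at hx; omega
    | cons b t' =>
      intro x hx
      rw [runs] at hx
      by_cases hab : a = b
      · rw [if_pos hab] at hx
        cases hr : runs (b :: t') with
        | nil => exact absurd hr (runs_ne_nil (by simp))
        | cons c R =>
          rw [hr, List.modifyHead_cons] at hx
          rcases List.mem_cons.mp hx with h | h
          · have : 0 < c := ih c (by rw [hr]; simp)
            omega
          · exact ih x (by rw [hr]; exact List.mem_cons_of_mem _ h)
      · rw [if_neg hab] at hx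
        rcases List.mem_cons.mp hx with h | h
        · omega
        · exact ih x h

lemma build_runs : ∀ (l : List Bool) (a : Bool), build a (runs (a :: l)) = a :: l := by
  intro l
  induction l with
  | nil => intro a; rfl
  | cons b t ih =>
    intro a
    by_cases hab : a = b
    · subst hab
      rw [runs, if_pos rfl]
      have hne := runs_ne_nil (l := a :: t) (by simp)
      cases hr : runs (a :: t) with
      | nil => exact absurd hr hne
      | cons c R =>
        rw [List.modifyHead_cons, build]
        have : List.replicate (c + 1) a = a :: List.replicate c a := by
          simp [List.replicate_succ]
        rw [this]
        have hb : build a (c :: R) = a :: t := by rw [← hr]; exact ih a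
        rw [build] at hb
        rw [List.cons_append, hb]
    · rw [runs, if_neg hab, build]
      have hba : (!a) = b := by
        cases a <;> cases b <;> simp_all
      rw [hba, show List.replicate 1 a = [a] from rfl, List.singleton_append, ih b]

lemma runs_replicate (s : Bool) : ∀ a : ℕ, runs (List.replicate (a + 1) s) = [a + 1] := by
  intro a
  induction a with
  | zero => rfl
  | succ a ih =>
    have e1 : List.replicate (a + 1 + 1) s = s :: List.replicate (a + 1) s := by
      simp [List.replicate_succ]
    have e2 : List.replicate (a + 1) s = s :: List.replicate a s := by
      simp [List.replicate_succ]
    rw [e1, e2, runs, if_pos rfl, ← e2, ih]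
    rfl

lemma runs_replicate_append (s : Bool) (t : List Bool) (ht : t.head? = some (!s)) :
    ∀ a : ℕ, runs (List.replicate (a + 1) s ++ t) = (a + 1) :: runs t := by
  intro a
  induction a with
  | zero =>
    cases t with
    | nil => simp at ht
    | cons b t' =>
      simp at ht
      subst ht
      rw [show List.replicate 1 s ++ (!s) :: t' = s :: (!s) :: t' from rfl, runs,
        if_neg (by cases s <;> simp)]

  | succ a ih =>
    have h1 : List.replicate (a + 1 + 1) s ++ t = s :: (List.replicate (a + 1) s ++ t) := by
      simp [List.replicate_succ]
    have h2 : List.replicate (a + 1) s ++ t = s :: (List.replicate a s ++ t) := by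
      simp [List.replicate_succ]
    rw [h1, h2, runs, if_pos rfl, ← h2, ih]
    rfl

lemma runs_build : ∀ (R : List ℕ) (s : Bool), R ≠ [] → (∀ x ∈ R, 0 < x) →
    runs (build s R) = R := by
  intro R
  induction R with
  | nil => simp
  | cons a R ih =>
    intro s _ hpos
    have ha : 0 < a := hpos a (by simp)
    obtain ⟨b, rfl⟩ : ∃ b, a = b + 1 := ⟨a - 1, by omega⟩
    cases R with
    | nil =>
      rw [build, show build (!s) ([] : List ℕ) = [] from rfl, List.append_nil, runs_replicate]
    | cons c R' =>
      have hpos' : ∀ x ∈ c :: R', 0 < x := fun x hx => hpos x (List.mem_cons_of_mem _ hx)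
      obtain ⟨t, hbt⟩ := build_struct (!s) (c :: R') (by simp) hpos'
      rw [build, runs_replicate_append s _ (by rw [hbt]; rfl), ih (!s) (by simp) hpos']

/- ### misc -/

lemma tauL_le : ∀ l : List Bool, l ≠ [] → tauL l + 1 ≤ l.length := by
  intro l
  induction l using tauL.induct with
  | case1 => simp
  | case2 a => intro _; simp [tauL]
  | case3 a b t ih =>
    intro _
    rw [tauL]
    have := ih (by simp)
    by_cases hab : a = b <;> simp [hab] at this ⊢ <;> omega

lemma tauL_zero_const : ∀ l : List Bool, tauL l = 0 → ∀ x ∈ l, ∀ y ∈ l, x = y := by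
  intro l
  induction l using tauL.induct with
  | case1 => simp
  | case2 a => intro _ x hx y hy; simp at hx hy; rw [hx, hy]
  | case3 a b t ih =>
    intro h x hx y hy
    rw [tauL] at h
    have hab : a = b := by by_contra hc; rw [if_neg hc] at h; omega
    have h0 : tauL (b :: t) = 0 := by rw [if_pos hab] at h; omega
    have key : ∀ z ∈ a :: b :: t, z ∈ b :: t := by
      intro z hz
      rcases List.mem_cons.mp hz with h' | h'
      · rw [h', hab]; simp
      · exact h'
    exact ih h0 x (key x hx) y (key y hy)

lemma tauL_pos (m : ℕ) (hm : 1 ≤ m) (l : List Bool)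
    (h0 : l.count false = m) (h1 : l.count true = m) : 1 ≤ tauL l := by
  by_contra hc
  push_neg at hc
  have htz : tauL l = 0 := by omega
  have hf : false ∈ l := by
    have : 0 < l.count false := by omega
    exact List.count_pos_iff.mp this
  have ht : true ∈ l := by
    have : 0 < l.count true := by omega
    exact List.count_pos_iff.mp this
  exact absurd (tauL_zero_const l htz false hf true ht) (by simp)

lemma length_le_sum : ∀ L : List ℕ, (∀ x ∈ L, 0 < x) → L.length ≤ L.sum := by
  intro L
  induction L with
  | nil => simp
  | cons a L ih =>
    intro h
    have := h a (by simp)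
    have := ih (fun x hx => h x (List.mem_cons_of_mem _ hx))
    simp
    omega

lemma il_ne_nil {A : List α} (B : List α) (h : A ≠ []) : il A B ≠ [] := by
  cases A with
  | nil => simp at h
  | cons a A => simp

/- ### the main lemma -/

lemma main (m : ℕ) (hm : 1 ≤ m) (l : List Bool)
    (h0 : l.count false = m) (h1 : l.count true = m) :
    (phiL l).count false = m ∧ (phiL l).count true = m ∧
      tauL (phiL l) + tauL l = 2 * m ∧ phiL (phiL l) = l := by
  have hlen : l.length = 2 * m := by have := count_bool l; omega
  obtain ⟨x, t, rfl⟩ : ∃ x t, l = x :: t := by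
    cases l with
    | nil => simp at hlen; omega
    | cons x t => exact ⟨x, t, rfl⟩
  set R := runs (x :: t) with hRdef
  have hRne : R ≠ [] := runs_ne_nil (by simp)
  have hRpos : ∀ y ∈ R, 0 < y := pos_runs _
  have hbuild : build x R = x :: t := build_runs t x
  set A := ev R with hAdef
  set B := od R with hBdef
  have hAne : A ≠ [] := ev_ne_nil hRne
  have hApos : ∀ y ∈ A, 0 < y := fun y hy => hRpos y (mem_ev R y hy)
  have hBpos : ∀ y ∈ B, 0 < y := fun y hy => hRpos y (mem_od R y hy)
  have hilAB : il A B = R := il_ev_od R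
  have hcx : (x :: t).count x = A.sum := by rw [← hbuild]; exact (count_build R x).1
  have hcnx : (x :: t).count (!x) = B.sum := by rw [← hbuild]; exact (count_build R x).2
  have hsumA : A.sum = m := by
    cases x
    · rw [← h0]; exact hcx.symm
    · rw [← h1]; exact hcx.symm
  have hsumB : B.sum = m := by
    cases x
    · rw [← h1]; exact hcnx.symm
    · rw [← h0]; exact hcnx.symm
  have hBne : B ≠ [] := by
    intro hcon
    rw [hcon] at hsumB
    simp at hsumB
    omega
  have htau : tauL (x :: t) + 1 = R.length := by
    rw [← hbuild]; exact tauL_build R x hRne hRpos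
  have hlenAB : A.length + B.length = R.length := by
    rw [← hilAB]; exact (length_il A B).symm
  have he1 : A.length = (R.length + 1) / 2 := (length_ev_od R).1
  have he2 : B.length = R.length / 2 := (length_ev_od R).2
  have hlenA_le : A.length ≤ m := by
    have := length_le_sum A hApos; omega
  have hlenB_le : B.length ≤ m := by
    have := length_le_sum B hBpos; omega
  set A' := compl' A with hA'def
  set B' := compl' B with hB'def
  have hA'ne : A' ≠ [] := compl'_ne_nil A
  have hB'ne : B' ≠ [] := compl'_ne_nil B
  have hA'pos : ∀ y ∈ A', 0 < y := pos_compl' A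
  have hB'pos : ∀ y ∈ B', 0 < y := pos_compl' B
  have hsumA' : A'.sum = m := by rw [hA'def, sum_compl' A hAne hApos, hsumA]
  have hsumB' : B'.sum = m := by rw [hB'def, sum_compl' B hBne hBpos, hsumB]
  have hlenA' : A'.length + A.length = m + 1 := by
    have := length_compl' A hAne hApos; rw [hsumA] at this; exact this
  have hlenB' : B'.length + B.length = m + 1 := by
    have := length_compl' B hBne hBpos; rw [hsumB] at this; exact this
  have hcomplA : compl' A' = A := by rw [hA'def]; exact compl'_compl' A hAne hApos
  have hcomplB : compl' B' = B := by rw [hB'def]; exact compl'_compl' B hBne hBpos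
  by_cases hc : A.length = B.length
  · -- balanced case
    have hphi : phiL (x :: t) = build x (il A' B') := by
      rw [phiL, ← hRdef, ← hAdef, ← hBdef, if_pos hc, List.head!_cons, ← hA'def, ← hB'def]
    have hilpos : ∀ y ∈ il A' B', 0 < y :=
      fun y hy => (mem_il A' B' y hy).elim (hA'pos y) (hB'pos y)
    have hilne : il A' B' ≠ [] := il_ne_nil B' hA'ne
    have hlenA'B' : A'.length = B'.length := by omega
    have hevil := ev_od_il (A'.length + B'.length) A' B' le_rfl (by omega) (by omega)
    have hcnt := count_build (il A' B') x
    rw [hevil.1, hevil.2] at hcnt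
    have hcnt1 : (phiL (x :: t)).count x = m := by rw [hphi, hcnt.1, hsumA']
    have hcnt2 : (phiL (x :: t)).count (!x) = m := by rw [hphi, hcnt.2, hsumB']
    have htau' : tauL (phiL (x :: t)) + 1 = A'.length + B'.length := by
      rw [hphi, tauL_build (il A' B') x hilne hilpos, length_il]
    obtain ⟨t', ht'⟩ := build_struct x (il A' B') hilne hilpos
    have hinv : phiL (phiL (x :: t)) = x :: t := by
      rw [hphi, phiL, runs_build (il A' B') x hilne hilpos, hevil.1, hevil.2,
        if_pos hlenA'B', ht', List.head!_cons, hcomplA, hcomplB, hilAB, hbuild]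
    refine ⟨?_, ?_, by omega, hinv⟩
    · cases x
      · exact hcnt1
      · exact hcnt2
    · cases x
      · exact hcnt2
      · exact hcnt1
  · -- unbalanced case
    have hc2 : A.length = B.length + 1 := by omega
    have hphi : phiL (x :: t) = build (!x) (il B' A') := by
      rw [phiL, ← hRdef, ← hAdef, ← hBdef, if_neg hc, List.head!_cons, ← hA'def, ← hB'def]
    have hilpos : ∀ y ∈ il B' A', 0 < y :=
      fun y hy => (mem_il B' A' y hy).elim (hB'pos y) (hA'pos y)
    have hilne : il B' A' ≠ [] := il_ne_nil A' hB'ne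
    have hlenB'A' : B'.length = A'.length + 1 := by omega
    have hevil := ev_od_il (B'.length + A'.length) B' A' le_rfl (by omega) (by omega)
    have hcnt := count_build (il B' A') (!x)
    rw [hevil.1, hevil.2, Bool.not_not] at hcnt
    have hcnt1 : (phiL (x :: t)).count (!x) = m := by rw [hphi, hcnt.1, hsumB']
    have hcnt2 : (phiL (x :: t)).count x = m := by rw [hphi, hcnt.2, hsumA']
    have htau' : tauL (phiL (x :: t)) + 1 = B'.length + A'.length := by
      rw [hphi, tauL_build (il B' A') (!x) hilne hilpos, length_il]
    obtain ⟨t', ht'⟩ := build_struct (!x) (il B' A') hilne hilpos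
    have hinv : phiL (phiL (x :: t)) = x :: t := by
      rw [hphi, phiL, runs_build (il B' A') (!x) hilne hilpos, hevil.1, hevil.2,
        if_neg (by omega), ht', List.head!_cons, Bool.not_not, hcomplA, hcomplB, hilAB, hbuild]
    refine ⟨?_, ?_, by omega, hinv⟩
    · cases x
      · exact hcnt2
      · exact hcnt1
    · cases x
      · exact hcnt1
      · exact hcnt2

/- ### Fin / List transfer -/

lemma count_eq {n : ℕ} (x : Fin n → Bool) (b : Bool) :
    (Finset.univ.filter (fun i => x i = b)).card = (List.ofFn x).count b := by
  induction n with
  | zero => simp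
  | succ n ih =>
    rw [List.ofFn_succ, List.count_cons, Finset.card_filter, Fin.sum_univ_succ,
      ← Finset.card_filter, ih (fun i => x i.succ)]
    by_cases h : x 0 = b
    · simp [h, Nat.add_comm]
    · simp [h, Ne.symm h]

lemma tau_eq {n : ℕ} (x : Fin n → Bool) : tau x = tauL (List.ofFn x) := by
  induction n with
  | zero => simp [tau, tauL]
  | succ n ih =>
    cases n with
    | zero =>
      rw [tau]
      have : ∀ i : Fin 1, ¬∃ h : (i : ℕ) + 1 < 1, x i ≠ x ⟨(i : ℕ) + 1, h⟩ := by
        intro i ⟨h, _⟩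
        omega
      rw [Finset.filter_eq_empty_iff.mpr (fun i _ => this i)]
      simp [tauL]
    | succ n =>
      have step : tau x = (if x 0 = x 1 then 0 else 1) + tau (fun i => x i.succ) := by
        rw [tau, tau, Finset.card_filter, Finset.card_filter, Fin.sum_univ_succ]
        congr 1
        · have h1 : ((0 : Fin (n + 1 + 1)) : ℕ) + 1 < n + 1 + 1 := by simp
          have h2 : (⟨((0 : Fin (n + 1 + 1)) : ℕ) + 1, h1⟩ : Fin (n + 1 + 1)) = 1 := by
            ext; simp
          by_cases h : x 0 = x 1
          · rw [if_neg, if_pos h]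
            rintro ⟨h', hne⟩
            apply hne
            have : (⟨((0 : Fin (n + 1 + 1)) : ℕ) + 1, h'⟩ : Fin (n + 1 + 1)) = 1 := by
              ext; simp
            rw [this]
            exact h
          · rw [if_pos, if_neg h]
            refine ⟨h1, ?_⟩
            rw [h2]
            exact h
        · apply Finset.sum_congr rfl
          intro i _
          congr 1
          refine propext ?_
          constructor
          · rintro ⟨h', hne⟩
            have hlt : (i : ℕ) + 1 < n + 1 := by
              have := h'
              simp [Fin.val_succ] at this
              omega
            refine ⟨hlt, ?_⟩
            intro hc
            apply hne
            have : (⟨((i.succ : Fin (n + 1 + 1)) : ℕ) + 1, h'⟩ : Fin (n + 1 + 1)) =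
                (⟨(i : ℕ) + 1, hlt⟩ : Fin (n + 1)).succ := by
              ext; simp [Fin.val_succ]
            rw [this]
            exact hc
          · rintro ⟨h', hne⟩
            have hlt : ((i.succ : Fin (n + 1 + 1)) : ℕ) + 1 < n + 1 + 1 := by
              simp [Fin.val_succ]
              omega
            refine ⟨hlt, ?_⟩
            intro hc
            apply hne
            have : (⟨((i.succ : Fin (n + 1 + 1)) : ℕ) + 1, hlt⟩ : Fin (n + 1 + 1)) =
                (⟨(i : ℕ) + 1, h'⟩ : Fin (n + 1)).succ := by
              ext; simp [Fin.val_succ]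
            rw [← this]
            exact hc
      rw [step, ih (fun i => x i.succ)]
      have e1 : List.ofFn x = x 0 :: List.ofFn (fun i : Fin (n + 1) => x i.succ) := by
        rw [List.ofFn_succ]
      have e2 : List.ofFn (fun i : Fin (n + 1) => x i.succ) =
          x 1 :: List.ofFn (fun i : Fin n => x i.succ.succ) := by
        rw [List.ofFn_succ]
        congr 1
      rw [e1, e2, tauL, ← e2]

lemma ofFn_getD {n : ℕ} (l : List Bool) (h : l.length = n) :
    List.ofFn (fun i : Fin n => l.getD i false) = l := by
  apply List.ext_getElem
  · simp [h]
  · intro i h1 h2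
    simp only [List.getElem_ofFn]
    rw [List.getD_eq_getElem]

/-- the involution on functions -/
def phiF {n : ℕ} (x : Fin n → Bool) : Fin n → Bool :=
  fun i => (phiL (List.ofFn x)).getD i false

lemma getD_ofFn {n : ℕ} (x : Fin n → Bool) (i : Fin n) :
    (List.ofFn x).getD i false = x i := by
  rw [List.getD_eq_getElem _ _ (by simp [i.isLt])]
  simp

lemma key (m : ℕ) (hm : 1 ≤ m) (x : Fin (m + m) → Bool) (hx : x ∈ Bseq m m) :
    phiF x ∈ Bseq m m ∧ tau (phiF x) + tau x = 2 * m ∧ phiF (phiF x) = x := by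
  rw [Bseq, Finset.mem_filter] at hx
  obtain ⟨-, hc0, hc1⟩ := hx
  rw [count_eq] at hc0 hc1
  obtain ⟨m0, m1, mt, minv⟩ := main m hm (List.ofFn x) hc0 hc1
  have hlenphi : (phiL (List.ofFn x)).length = m + m := by
    have := count_bool (phiL (List.ofFn x))
    omega
  have hofn : List.ofFn (phiF x) = phiL (List.ofFn x) := ofFn_getD _ hlenphi
  refine ⟨?_, ?_, ?_⟩
  · rw [Bseq, Finset.mem_filter]
    refine ⟨Finset.mem_univ _, ?_, ?_⟩ <;> rw [count_eq, hofn] <;> assumption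
  · rw [tau_eq (phiF x), tau_eq x, hofn]
    exact mt
  · funext i
    show (phiL (List.ofFn (phiF x))).getD i false = x i
    rw [hofn, minv]
    exact getD_ofFn x i

end Stmt6

theorem stmt_6 (m : ℕ) (hm : 1 ≤ m) (a : ℕ) :
    ((Bseq m m).filter (fun x => tau x = m + a)).card =
      ((Bseq m m).filter (fun x => tau x = m - a)).card := by
  by_cases ha : m ≤ a
  · have h1 : ((Bseq m m).filter (fun x => tau x = m + a)) = ∅ := by
      apply Finset.filter_eq_empty_iff.mpr
      intro x hx
      rw [Bseq, Finset.mem_filter] at hx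
      obtain ⟨-, hc0, hc1⟩ := hx
      rw [Stmt6.count_eq] at hc0 hc1
      have hne : List.ofFn x ≠ [] := by
        intro hc
        rw [hc] at hc0
        simp at hc0
        omega
      have hle := Stmt6.tauL_le (List.ofFn x) hne
      rw [List.length_ofFn] at hle
      rw [Stmt6.tau_eq]
      omega
    have h2 : ((Bseq m m).filter (fun x => tau x = m - a)) = ∅ := by
      apply Finset.filter_eq_empty_iff.mpr
      intro x hx
      rw [Bseq, Finset.mem_filter] at hx
      obtain ⟨-, hc0, hc1⟩ := hx
      rw [Stmt6.count_eq] at hc0 hc1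
      have hpos := Stmt6.tauL_pos m hm (List.ofFn x) hc0 hc1
      rw [Stmt6.tau_eq]
      omega
    rw [h1, h2]
  · push_neg at ha
    apply Finset.card_nbij' Stmt6.phiF Stmt6.phiF
    · intro x hx
      rw [Finset.mem_coe, Finset.mem_filter] at hx ⊢
      obtain ⟨hxB, hxt⟩ := hx
      obtain ⟨hB, ht, -⟩ := Stmt6.key m hm x hxB
      exact ⟨hB, by omega⟩
    · intro x hx
      rw [Finset.mem_coe, Finset.mem_filter] at hx ⊢
      obtain ⟨hxB, hxt⟩ := hx
      obtain ⟨hB, ht, -⟩ := Stmt6.key m hm x hxB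
      exact ⟨hB, by omega⟩
    · intro x hx
      exact (Stmt6.key m hm x (Finset.mem_filter.mp hx).1).2.2
    · intro x hx
      exact (Stmt6.key m hm x (Finset.mem_filter.mp hx).1).2.2
end

section
/- Let m ≥ 1 be a natural number. Then (2m − 1) · Σ_{x ∈ B_{m,m}} τ(x)² = m · (2m² − 1) · C(2m, m), where C(2m, m) denotes the central binomial coefficient. Equivalently, if X is sampled uniformly at random from B_{m,m}, then E[τ(X)²] = m(2m² − 1)/(2m − 1). -/
open Finset

lemma mem_Bseq {n0 n1 : ℕ} (x : Fin (n0 + n1) → Bool) :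
    x ∈ Bseq n0 n1 ↔ (univ.filter (fun i => x i = false)).card = n0 := by
  have key : (univ.filter (fun i => x i = false)).card
      + (univ.filter (fun i => x i = true)).card = n0 + n1 := by
    have h2 : (univ.filter (fun i => x i = true)) =
        (univ.filter (fun i : Fin (n0+n1) => ¬ (x i = false))) := by
      apply filter_congr; intro i _; simp
    rw [h2, Finset.card_filter_add_card_filter_not, card_univ, Fintype.card_fin]
  simp only [Bseq, mem_filter, mem_univ, true_and]
  omega

lemma count_FT {n0 n1 : ℕ} (F T : Finset (Fin (n0 + n1)))
    (hd : Disjoint F T) (hF : F.card ≤ n0) :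
    ((Bseq n0 n1).filter (fun x => (∀ i ∈ F, x i = false) ∧ (∀ i ∈ T, x i = true))).card
      = Nat.choose (n0 + n1 - (F.card + T.card)) (n0 - F.card) := by
  have hcompl : ((F ∪ T)ᶜ : Finset (Fin (n0+n1))).card = n0 + n1 - (F.card + T.card) := by
    rw [card_compl, Fintype.card_fin, card_union_of_disjoint hd]
  rw [← hcompl, ← Finset.card_powersetCard]
  apply Finset.card_nbij' (fun x => (univ.filter (fun i => x i = false)) \ F)
      (fun S => fun k => if k ∈ S ∪ F then false else true)
  · intro x hx
    simp only [mem_coe, mem_filter, mem_Bseq] at hx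
    obtain ⟨hcard, hFx, hTx⟩ := hx
    have hFsub : F ⊆ univ.filter (fun i => x i = false) := by
      intro i hi; simp [hFx i hi]
    rw [mem_coe, mem_powersetCard]
    constructor
    · intro k hk
      simp only [mem_sdiff, mem_filter, mem_univ, true_and] at hk
      simp only [mem_compl, mem_union]
      rintro (h | h)
      · exact hk.2 h
      · have := hTx k h; simp [this] at hk
    · rw [card_sdiff_of_subset hFsub, hcard]
  · intro S hS
    rw [mem_coe, mem_powersetCard] at hS
    obtain ⟨hsub, hcard⟩ := hS
    have hdSF : Disjoint S F := by
      apply Finset.disjoint_left.mpr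
      intro a ha hb
      have := hsub ha
      simp only [mem_compl, mem_union] at this
      exact this (Or.inl hb)
    simp only [mem_coe, mem_filter, mem_Bseq]
    refine ⟨?_, ?_, ?_⟩
    · have : (univ.filter (fun i => (if i ∈ S ∪ F then false else true) = false)) = S ∪ F := by
        ext k; simp only [mem_filter, mem_univ, true_and]
        split_ifs with h <;> simp [h]
      rw [this, card_union_of_disjoint hdSF, hcard]
      omega
    · intro i hi; simp [mem_union, hi]
    · intro i hi
      have h1 : i ∉ S := by
        intro h; have := hsub h; simp [mem_compl, mem_union] at this; exact this.2 hi
      have h2 : i ∉ F := (Finset.disjoint_right.mp hd) hi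
      simp [mem_union, h1, h2]
  · intro x hx
    simp only [mem_coe, mem_filter, mem_Bseq] at hx
    obtain ⟨hcard, hFx, hTx⟩ := hx
    funext k
    have : (univ.filter (fun i => x i = false) \ F) ∪ F = univ.filter (fun i => x i = false) := by
      apply Finset.sdiff_union_of_subset
      intro i hi; simp [hFx i hi]
    dsimp only
    rw [this]
    by_cases h : x k = false
    · simp [mem_filter, h]
    · simp only [mem_filter, mem_univ, true_and]
      rw [if_neg h]; simp at h; exact h.symm
  · intro S hS
    rw [mem_coe, mem_powersetCard] at hS
    obtain ⟨hsub, _⟩ := hS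
    have hdSF : Disjoint S F := by
      apply Finset.disjoint_left.mpr
      intro a ha hb
      have := hsub ha
      simp only [mem_compl, mem_union] at this
      exact this (Or.inl hb)
    have : (univ.filter (fun k => (if k ∈ S ∪ F then false else true) = false)) = S ∪ F := by
      ext k; simp only [mem_filter, mem_univ, true_and]
      split_ifs with h <;> simp [h]
    dsimp only
    rw [this, union_sdiff_right]
    exact sdiff_eq_self_of_disjoint hdSF

lemma count2 {m : ℕ} (hm : 1 ≤ m) (a b : Fin (m + m)) (hab : a ≠ b) :
    ((Bseq m m).filter (fun x => x a = false ∧ x b = true)).card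
      = (m + m - 2).choose (m - 1) := by
  have h := count_FT (n0 := m) (n1 := m) {a} {b} (by simp [hab.symm, hab]) (by simp; omega)
  norm_num at h
  rw [← h]
  all_goals exact congrArg Finset.card (filter_congr (fun x _ => by tauto))

lemma count21 {m : ℕ} (hm : 2 ≤ m) (a b c : Fin (m + m)) (hab : a ≠ b) (hac : a ≠ c)
    (hbc : b ≠ c) :
    ((Bseq m m).filter (fun x => x a = false ∧ x b = false ∧ x c = true)).card
      = (m + m - 3).choose (m - 2) := by
  have h := count_FT (n0 := m) (n1 := m) {a, b} {c}
    (by simp; exact ⟨hac.symm, hbc.symm⟩)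
    (by rw [card_insert_of_notMem (by simp [hab])]; simp; omega)
  rw [card_insert_of_notMem (by simp [hab]), card_singleton] at h
  norm_num at h
  rw [← h]
  all_goals exact congrArg Finset.card (filter_congr (fun x _ => by tauto))

lemma count12 {m : ℕ} (hm : 1 ≤ m) (a b c : Fin (m + m)) (hab : a ≠ b) (hac : a ≠ c)
    (hbc : b ≠ c) :
    ((Bseq m m).filter (fun x => x a = false ∧ x b = true ∧ x c = true)).card
      = (m + m - 3).choose (m - 1) := by
  have h := count_FT (n0 := m) (n1 := m) {a} {b, c}
    (by simp; exact ⟨hab, hac⟩) (by simp; omega)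
  rw [card_insert_of_notMem (by simp [hbc]), card_singleton] at h
  norm_num at h
  rw [← h]
  all_goals exact congrArg Finset.card (filter_congr (fun x _ => by tauto))

lemma count22 {m : ℕ} (hm : 2 ≤ m) (a b c d : Fin (m + m)) (hab : a ≠ b) (hac : a ≠ c)
    (had : a ≠ d) (hbc : b ≠ c) (hbd : b ≠ d) (hcd : c ≠ d) :
    ((Bseq m m).filter (fun x => x a = false ∧ x b = false ∧ x c = true ∧ x d = true)).card
      = (m + m - 4).choose (m - 2) := by
  have h := count_FT (n0 := m) (n1 := m) {a, b} {c, d}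
    (by simp [Finset.disjoint_left]; exact ⟨⟨hac, had⟩, hbc, hbd⟩)
    (by rw [card_insert_of_notMem (by simp [hab])]; simp; omega)
  rw [card_insert_of_notMem (by simp [hab]), card_singleton,
    card_insert_of_notMem (by simp [hcd]), card_singleton] at h
  norm_num at h
  rw [← h]
  all_goals exact congrArg Finset.card (filter_congr (fun x _ => by tauto))

lemma cF_diag {m : ℕ} (hm : 1 ≤ m) (a b : Fin (m + m)) (hab : a ≠ b) :
    ((Bseq m m).filter (fun x => x a ≠ x b)).card = 2 * (m + m - 2).choose (m - 1) := by
  rw [Finset.card_filter]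
  have key : ∀ x ∈ Bseq m m, (if x a ≠ x b then (1:ℕ) else 0) =
      (if x a = false ∧ x b = true then 1 else 0)
        + (if x b = false ∧ x a = true then 1 else 0) := by
    intro x _
    cases hxa : x a <;> cases hxb : x b <;> simp
  rw [Finset.sum_congr rfl key, Finset.sum_add_distrib, ← Finset.card_filter,
    ← Finset.card_filter, count2 hm a b hab, count2 hm b a hab.symm]
  ring

lemma cF_adj {m : ℕ} (hm : 2 ≤ m) (a b c : Fin (m + m)) (hab : a ≠ b) (hac : a ≠ c)
    (hbc : b ≠ c) :
    ((Bseq m m).filter (fun x => x a ≠ x b ∧ x b ≠ x c)).card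
      = (m + m - 2).choose (m - 1) := by
  rw [Finset.card_filter]
  have key : ∀ x ∈ Bseq m m, (if x a ≠ x b ∧ x b ≠ x c then (1:ℕ) else 0) =
      (if x a = false ∧ x c = false ∧ x b = true then 1 else 0)
        + (if x b = false ∧ x a = true ∧ x c = true then 1 else 0) := by
    intro x _
    cases hxa : x a <;> cases hxb : x b <;> cases hxc : x c <;> simp
  rw [Finset.sum_congr rfl key, Finset.sum_add_distrib, ← Finset.card_filter,
    ← Finset.card_filter, count21 hm a c b hac hab hbc.symm,
    count12 (by omega) b a c hab.symm hbc hac]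
  have h1 : m + m - 2 = (m + m - 3) + 1 := by omega
  have h2 : m - 1 = (m - 2) + 1 := by omega
  rw [h1, h2, Nat.choose_succ_succ]

lemma cF_far {m : ℕ} (hm : 2 ≤ m) (a b c d : Fin (m + m)) (hab : a ≠ b) (hac : a ≠ c)
    (had : a ≠ d) (hbc : b ≠ c) (hbd : b ≠ d) (hcd : c ≠ d) :
    ((Bseq m m).filter (fun x => x a ≠ x b ∧ x c ≠ x d)).card
      = 4 * (m + m - 4).choose (m - 2) := by
  rw [Finset.card_filter]
  have key : ∀ x ∈ Bseq m m, (if x a ≠ x b ∧ x c ≠ x d then (1:ℕ) else 0) =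
      ((if x a = false ∧ x c = false ∧ x b = true ∧ x d = true then 1 else 0)
        + (if x a = false ∧ x d = false ∧ x b = true ∧ x c = true then 1 else 0))
        + ((if x b = false ∧ x c = false ∧ x a = true ∧ x d = true then 1 else 0)
        + (if x b = false ∧ x d = false ∧ x a = true ∧ x c = true then 1 else 0)) := by
    intro x _
    cases hxa : x a <;> cases hxb : x b <;> cases hxc : x c <;> cases hxd : x d <;> simp
  rw [Finset.sum_congr rfl key, Finset.sum_add_distrib, Finset.sum_add_distrib,
    Finset.sum_add_distrib, ← Finset.card_filter, ← Finset.card_filter,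
    ← Finset.card_filter, ← Finset.card_filter,
    count22 hm a c b d hac hab had hbc.symm hcd hbd,
    count22 hm a d b c had hab hac hbd.symm hcd.symm hbc,
    count22 hm b c a d hbc hab.symm hbd hac.symm hcd had,
    count22 hm b d a c hbd hab.symm hbc had.symm hcd.symm hac]
  ring

noncomputable def Kz (m : ℕ) : ℤ := ((m + m - 2).choose (m - 1) : ℤ)
noncomputable def Lz (m : ℕ) : ℤ := ((m + m - 4).choose (m - 2) : ℤ)

noncomputable def cInt (m a b : ℕ) : ℤ :=
  (if a + 1 < m + m ∧ b + 1 < m + m then 4 * Lz m else 0)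
  + (if a = b ∧ a + 1 < m + m then 2 * Kz m - 4 * Lz m else 0)
  + (if b = a + 1 ∧ b + 1 < m + m then Kz m - 4 * Lz m else 0)
  + (if a = b + 1 ∧ a + 1 < m + m then Kz m - 4 * Lz m else 0)


set_option maxHeartbeats 1000000 in
lemma pointwise {m : ℕ} (hm : 2 ≤ m) (i j : Fin (m + m)) :
    (((Bseq m m).filter (fun x =>
        (∃ h : (i : ℕ) + 1 < m + m, x i ≠ x ⟨(i : ℕ) + 1, h⟩)
          ∧ (∃ h : (j : ℕ) + 1 < m + m, x j ≠ x ⟨(j : ℕ) + 1, h⟩))).card : ℤ)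
      = cInt m i j := by
  by_cases hi : (i : ℕ) + 1 < m + m
  · by_cases hj : (j : ℕ) + 1 < m + m
    · set i' : Fin (m + m) := ⟨(i : ℕ) + 1, hi⟩ with hi'
      set j' : Fin (m + m) := ⟨(j : ℕ) + 1, hj⟩ with hj'
      have hii' : i ≠ i' := by simp [Fin.ext_iff, hi']
      have hjj' : j ≠ j' := by simp [Fin.ext_iff, hj']
      have hcond : ∀ x : Fin (m + m) → Bool,
          ((∃ h : (i : ℕ) + 1 < m + m, x i ≠ x ⟨(i : ℕ) + 1, h⟩)
            ∧ (∃ h : (j : ℕ) + 1 < m + m, x j ≠ x ⟨(j : ℕ) + 1, h⟩))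
          ↔ (x i ≠ x i' ∧ x j ≠ x j') := by
        intro x
        constructor
        · rintro ⟨⟨_, h1⟩, ⟨_, h2⟩⟩; exact ⟨h1, h2⟩
        · rintro ⟨h1, h2⟩; exact ⟨⟨hi, h1⟩, ⟨hj, h2⟩⟩
      rw [filter_congr (fun x _ => hcond x)]
      rcases Nat.lt_trichotomy (i : ℕ) (j : ℕ) with hij | hij | hij
      · rcases Nat.eq_or_lt_of_le (Nat.succ_le_of_lt hij) with hadj | hfar
        · -- j = i + 1
          have hji : j = i' := by simp [Fin.ext_iff, hi', ← hadj]
          have e1 : i ≠ j' := by simp [Fin.ext_iff, hj']; omega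
          have e2 : i' ≠ j' := by simp [Fin.ext_iff, hi', hj']; omega
          rw [filter_congr (fun x _ => by rw [hji] :
            ∀ x ∈ Bseq m m, (x i ≠ x i' ∧ x j ≠ x j') ↔ (x i ≠ x i' ∧ x i' ≠ x j')),
            cF_adj hm i i' j' hii' e1 e2]
          simp only [cInt, Kz, Lz, eq_self_iff_true, true_and, and_self]
          split_ifs <;> first | (push_cast; ring1) | (exfalso; omega)
        · -- far, i < j
          have e1 : i ≠ j := by simp [Fin.ext_iff]; omega
          have e2 : i ≠ j' := by simp [Fin.ext_iff, hj']; omega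
          have e3 : i' ≠ j := by simp [Fin.ext_iff, hi']; omega
          have e4 : i' ≠ j' := by simp [Fin.ext_iff, hi', hj']; omega
          rw [cF_far hm i i' j j' hii' e1 e2 e3 e4 hjj']
          simp only [cInt, Kz, Lz, eq_self_iff_true, true_and, and_self]
          split_ifs <;> first | (push_cast; ring1) | (exfalso; omega)
      · -- i = j
        have hij' : i = j := by simp [Fin.ext_iff, hij]
        subst hij'
        rw [filter_congr (fun x _ => by tauto :
          ∀ x ∈ Bseq m m, (x i ≠ x i' ∧ x i ≠ x j') ↔ (x i ≠ x i' : Prop)),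
          cF_diag (by omega) i i' hii']
        simp only [cInt, Kz, Lz, eq_self_iff_true, true_and, and_self]
        split_ifs <;> first | (push_cast; ring1) | (exfalso; omega)
      · rcases Nat.eq_or_lt_of_le (Nat.succ_le_of_lt hij) with hadj | hfar
        · -- i = j + 1
          have hij' : i = j' := by simp [Fin.ext_iff, hj', ← hadj]
          have e1 : j ≠ i' := by simp [Fin.ext_iff, hi']; omega
          have e2 : j' ≠ i' := by simp [Fin.ext_iff, hi', hj']; omega
          rw [filter_congr (fun x _ => by rw [hij']; tauto :
            ∀ x ∈ Bseq m m, (x i ≠ x i' ∧ x j ≠ x j') ↔ (x j ≠ x j' ∧ x j' ≠ x i')),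
            cF_adj hm j j' i' hjj' e1 e2]
          simp only [cInt, Kz, Lz, eq_self_iff_true, true_and, and_self]
          split_ifs <;> first | (push_cast; ring1) | (exfalso; omega)
        · -- far, j < i
          have e1 : j ≠ i := by simp [Fin.ext_iff]; omega
          have e2 : j ≠ i' := by simp [Fin.ext_iff, hi']; omega
          have e3 : j' ≠ i := by simp [Fin.ext_iff, hj']; omega
          have e4 : j' ≠ i' := by simp [Fin.ext_iff, hi', hj']; omega
          rw [filter_congr (fun x _ => by tauto :
            ∀ x ∈ Bseq m m, (x i ≠ x i' ∧ x j ≠ x j') ↔ (x j ≠ x j' ∧ x i ≠ x i')),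
            cF_far hm j j' i i' hjj' e1 e2 e3 e4 hii']
          simp only [cInt, Kz, Lz, eq_self_iff_true, true_and, and_self]
          split_ifs <;> first | (push_cast; ring1) | (exfalso; omega)
    · have hempty : (Bseq m m).filter (fun x =>
          (∃ h : (i : ℕ) + 1 < m + m, x i ≠ x ⟨(i : ℕ) + 1, h⟩)
            ∧ (∃ h : (j : ℕ) + 1 < m + m, x j ≠ x ⟨(j : ℕ) + 1, h⟩)) = ∅ :=
        filter_eq_empty_iff.mpr (by rintro x - ⟨-, ⟨h, -⟩⟩; exact hj h)
      rw [hempty]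
      simp only [card_empty, Nat.cast_zero, cInt, Kz, Lz]
      split_ifs <;> first | ring1 | (exfalso; omega)
  · have hempty : (Bseq m m).filter (fun x =>
        (∃ h : (i : ℕ) + 1 < m + m, x i ≠ x ⟨(i : ℕ) + 1, h⟩)
          ∧ (∃ h : (j : ℕ) + 1 < m + m, x j ≠ x ⟨(j : ℕ) + 1, h⟩)) = ∅ :=
      filter_eq_empty_iff.mpr (by rintro x - ⟨⟨h, -⟩, -⟩; exact hi h)
    rw [hempty]
    simp only [card_empty, Nat.cast_zero, cInt, Kz, Lz]
    split_ifs <;> first | ring1 | (exfalso; omega)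

lemma sum_indicator_lt (n : ℕ) (c : ℤ) :
    (∑ b ∈ range n, if b + 1 < n then c else 0) = (n - 1 : ℕ) * c := by
  rw [← Finset.sum_filter]
  have : (range n).filter (fun b => b + 1 < n) = range (n - 1) := by
    ext b; simp [Finset.mem_range]; omega
  rw [this, Finset.sum_const, card_range, nsmul_eq_mul]

lemma sum_indicator_lt2 (n : ℕ) (c : ℤ) :
    (∑ b ∈ range n, if b + 2 < n then c else 0) = (n - 2 : ℕ) * c := by
  rw [← Finset.sum_filter]
  have : (range n).filter (fun b => b + 2 < n) = range (n - 2) := by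
    ext b; simp [Finset.mem_range]; omega
  rw [this, Finset.sum_const, card_range, nsmul_eq_mul]

lemma sum_cInt (m : ℕ) (hm : 2 ≤ m) :
    (∑ a ∈ range (m + m), ∑ b ∈ range (m + m), cInt m a b)
      = 4 * Lz m * (2 * m - 1) ^ 2 + (2 * Kz m - 4 * Lz m) * (2 * m - 1)
        + 2 * (Kz m - 4 * Lz m) * (2 * m - 2) := by
  have h1 : ((m + m - 1 : ℕ) : ℤ) = 2 * (m : ℤ) - 1 := by omega
  have h2 : ((m + m - 2 : ℕ) : ℤ) = 2 * (m : ℤ) - 2 := by omega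
  simp only [cInt]
  simp only [Finset.sum_add_distrib]
  have T1 : (∑ a ∈ range (m + m), ∑ b ∈ range (m + m),
      if a + 1 < m + m ∧ b + 1 < m + m then 4 * Lz m else 0)
      = (2 * (m:ℤ) - 1) * ((2 * (m:ℤ) - 1) * (4 * Lz m)) := by
    have inner : ∀ a, (∑ b ∈ range (m + m),
        if a + 1 < m + m ∧ b + 1 < m + m then 4 * Lz m else 0)
        = if a + 1 < m + m then ((m + m - 1 : ℕ) * (4 * Lz m) : ℤ) else 0 := by
      intro a
      by_cases ha : a + 1 < m + m
      · simp only [ha, true_and, if_true]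
        exact sum_indicator_lt (m + m) (4 * Lz m)
      · simp [ha]
    rw [Finset.sum_congr rfl (fun a _ => inner a), sum_indicator_lt, h1]
  have T2 : (∑ a ∈ range (m + m), ∑ b ∈ range (m + m),
      if a = b ∧ a + 1 < m + m then 2 * Kz m - 4 * Lz m else 0)
      = (2 * (m:ℤ) - 1) * (2 * Kz m - 4 * Lz m) := by
    have inner : ∀ a ∈ range (m + m), (∑ b ∈ range (m + m),
        if a = b ∧ a + 1 < m + m then 2 * Kz m - 4 * Lz m else 0)
        = if a + 1 < m + m then 2 * Kz m - 4 * Lz m else 0 := by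
      intro a ha
      rw [Finset.sum_congr rfl (fun b _ => by
        rw [show (if a = b ∧ a + 1 < m + m then 2 * Kz m - 4 * Lz m else 0)
          = if a = b then (if a + 1 < m + m then 2 * Kz m - 4 * Lz m else 0) else 0 by
            split_ifs <;> tauto])]
      rw [Finset.sum_ite_eq, if_pos ha]
    rw [Finset.sum_congr rfl inner, sum_indicator_lt, h1]
  have T3 : (∑ a ∈ range (m + m), ∑ b ∈ range (m + m),
      if b = a + 1 ∧ b + 1 < m + m then Kz m - 4 * Lz m else 0)
      = (2 * (m:ℤ) - 2) * (Kz m - 4 * Lz m) := by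
    have inner : ∀ a ∈ range (m + m), (∑ b ∈ range (m + m),
        if b = a + 1 ∧ b + 1 < m + m then Kz m - 4 * Lz m else 0)
        = if a + 2 < m + m then Kz m - 4 * Lz m else 0 := by
      intro a ha
      rw [Finset.sum_congr rfl (fun b _ => by
        rw [show (if b = a + 1 ∧ b + 1 < m + m then Kz m - 4 * Lz m else 0)
          = if a + 1 = b then (if b + 1 < m + m then Kz m - 4 * Lz m else 0) else 0 by
            split_ifs <;> first | rfl | omega | tauto])]
      rw [Finset.sum_ite_eq]
      simp only [Finset.mem_range]
      split_ifs <;> first | rfl | omega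
    rw [Finset.sum_congr rfl inner, sum_indicator_lt2, h2]
  have T4 : (∑ a ∈ range (m + m), ∑ b ∈ range (m + m),
      if a = b + 1 ∧ a + 1 < m + m then Kz m - 4 * Lz m else 0)
      = (2 * (m:ℤ) - 2) * (Kz m - 4 * Lz m) := by
    rw [Finset.sum_comm]
    have inner : ∀ b ∈ range (m + m), (∑ a ∈ range (m + m),
        if a = b + 1 ∧ a + 1 < m + m then Kz m - 4 * Lz m else 0)
        = if b + 2 < m + m then Kz m - 4 * Lz m else 0 := by
      intro b hb
      rw [Finset.sum_congr rfl (fun a _ => by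
        rw [show (if a = b + 1 ∧ a + 1 < m + m then Kz m - 4 * Lz m else 0)
          = if b + 1 = a then (if a + 1 < m + m then Kz m - 4 * Lz m else 0) else 0 by
            split_ifs <;> first | rfl | omega | tauto])]
      rw [Finset.sum_ite_eq]
      simp only [Finset.mem_range]
      split_ifs <;> first | rfl | omega
    rw [Finset.sum_congr rfl inner, sum_indicator_lt2, h2]
  rw [T1, T2, T3, T4]
  ring


theorem stmt_7 (m : ℕ) (hm : 1 ≤ m) :
    (2 * m - 1) * ∑ x ∈ Bseq m m, (tau x) ^ 2 =
      m * (2 * m ^ 2 - 1) * Nat.choose (2 * m) m := by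
  rcases Nat.lt_or_ge m 2 with hm2 | hm2
  · have hm1 : m = 1 := by omega
    subst hm1
    decide
  · obtain ⟨k, rfl⟩ : ∃ k, m = k + 2 := ⟨m - 2, by omega⟩
    set m := k + 2 with hmdef
    have ite_mul_ite : ∀ (p q : Prop) [Decidable p] [Decidable q],
        (if p then (1:ℤ) else 0) * (if q then 1 else 0) = if p ∧ q then 1 else 0 := by
      intro p q _ _
      by_cases hp : p <;> by_cases hq : q <;> simp [hp, hq]
    have hS : ((∑ x ∈ Bseq m m, (tau x) ^ 2 : ℕ) : ℤ)
        = ∑ a ∈ range (m + m), ∑ b ∈ range (m + m), cInt m a b := by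
      have htau : ∀ x : Fin (m + m) → Bool, ((tau x : ℤ))
          = ∑ i : Fin (m + m),
              (if (∃ h : (i : ℕ) + 1 < m + m, x i ≠ x ⟨(i : ℕ) + 1, h⟩) then (1:ℤ) else 0) := by
        intro x
        rw [tau, Finset.card_filter, Nat.cast_sum]
        exact Finset.sum_congr rfl fun i _ => by split_ifs <;> simp
      calc ((∑ x ∈ Bseq m m, (tau x) ^ 2 : ℕ) : ℤ)
          = ∑ x ∈ Bseq m m, ((tau x : ℤ)) ^ 2 := by push_cast; ring
        _ = ∑ x ∈ Bseq m m, ∑ i : Fin (m + m), ∑ j : Fin (m + m),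
              (if ((∃ h : (i : ℕ) + 1 < m + m, x i ≠ x ⟨(i : ℕ) + 1, h⟩)
                ∧ (∃ h : (j : ℕ) + 1 < m + m, x j ≠ x ⟨(j : ℕ) + 1, h⟩)) then (1:ℤ) else 0) := by
            refine Finset.sum_congr rfl fun x _ => ?_
            rw [sq, htau x, Finset.sum_mul_sum]
            exact Finset.sum_congr rfl fun i _ => Finset.sum_congr rfl fun j _ =>
              ite_mul_ite _ _
        _ = ∑ i : Fin (m + m), ∑ j : Fin (m + m), ∑ x ∈ Bseq m m,
              (if ((∃ h : (i : ℕ) + 1 < m + m, x i ≠ x ⟨(i : ℕ) + 1, h⟩)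
                ∧ (∃ h : (j : ℕ) + 1 < m + m, x j ≠ x ⟨(j : ℕ) + 1, h⟩)) then (1:ℤ) else 0) := by
            rw [Finset.sum_comm]
            refine Finset.sum_congr rfl fun i _ => ?_
            rw [Finset.sum_comm]
        _ = ∑ i : Fin (m + m), ∑ j : Fin (m + m), cInt m i j := by
            refine Finset.sum_congr rfl fun i _ => Finset.sum_congr rfl fun j _ => ?_
            rw [Finset.sum_boole]
            exact pointwise hm2 i j
        _ = ∑ a ∈ range (m + m), ∑ b ∈ range (m + m), cInt m a b := by
            rw [Fin.sum_univ_eq_sum_range (fun a => ∑ j : Fin (m + m), cInt m a j)]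
            exact Finset.sum_congr rfl fun a _ =>
              Fin.sum_univ_eq_sum_range (fun b => cInt m a b) (m + m)
    rw [sum_cInt m hm2] at hS
    have e1 : 2 * m - 1 = 2 * k + 3 := by omega
    have hmsq : m ^ 2 = k ^ 2 + 4 * k + 4 := by rw [hmdef]; ring
    have e2 : 2 * m ^ 2 - 1 = 2 * k ^ 2 + 8 * k + 7 := by omega
    rw [e1, e2]
    have eK : Kz m = ((k + 1).centralBinom : ℤ) := by
      rw [Kz, Nat.centralBinom, show m + m - 2 = 2 * (k + 1) by omega,
        show m - 1 = k + 1 by omega]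
    have eL : Lz m = (k.centralBinom : ℤ) := by
      rw [Lz, Nat.centralBinom, show m + m - 4 = 2 * k by omega,
        show m - 2 = k by omega]
    have eC : (2 * m).choose m = (k + 2).centralBinom := by
      rw [Nat.centralBinom]
    rw [eC]
    have r1 : ((k:ℤ) + 2) * ((k + 2).centralBinom : ℤ)
        = 2 * (2 * (k:ℤ) + 3) * ((k + 1).centralBinom : ℤ) := by
      have h := Nat.succ_mul_centralBinom_succ (k + 1)
      simp only [show k + 1 + 1 = k + 2 from by omega] at h
      zify at h
      linear_combination h
    have r2 : ((k:ℤ) + 1) * ((k + 1).centralBinom : ℤ)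
        = 2 * (2 * (k:ℤ) + 1) * (k.centralBinom : ℤ) := by
      have h := Nat.succ_mul_centralBinom_succ k
      zify at h
      linear_combination h
    refine (Nat.cast_inj (R := ℤ)).mp ?_
    push_cast [hS, eK, eL]
    rw [hmdef]; push_cast
    linear_combination (-(2 * ((k:ℤ) + 2) ^ 2 - 1)) * r1
      + (-(4 * (2 * (k:ℤ) + 3) * ((k:ℤ) + 1))) * r2
end

section
/- For every natural number m ≥ 1, the identity 4(2m − 1) · Σ_{x=1}^{m} x³ · C(m, x)² = m³ · (m + 1) · C(2m, m) holds, where C(a, b) denotes the binomial coefficient. -/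
open Finset

lemma sum_choose_sq (n : ℕ) :
    ∑ k ∈ range (n + 1), (n.choose k) ^ 2 = (2 * n).choose n := by
  have h := Nat.add_choose_eq n n n
  rw [Finset.Nat.sum_antidiagonal_eq_sum_range_succ_mk] at h
  rw [two_mul, h]
  refine Finset.sum_congr rfl fun k hk => ?_
  rw [Finset.mem_range] at hk
  show n.choose k ^ 2 = n.choose k * n.choose (n - k)
  rw [Nat.choose_symm (by omega : k ≤ n), sq]

lemma two_mul_sum_k_choose_sq (n : ℕ) :
    2 * ∑ k ∈ range (n + 1), k * (n.choose k) ^ 2 = n * (2 * n).choose n := by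
  have hrefl : ∑ k ∈ range (n + 1), k * (n.choose k) ^ 2
      = ∑ k ∈ range (n + 1), (n - k) * (n.choose k) ^ 2 := by
    rw [← Finset.sum_range_reflect]
    refine Finset.sum_congr rfl fun k hk => ?_
    rw [Finset.mem_range] at hk
    have e : n + 1 - 1 - k = n - k := by omega
    rw [e, Nat.choose_symm (by omega : k ≤ n)]
  have key : 2 * ∑ k ∈ range (n + 1), k * (n.choose k) ^ 2
      = ∑ k ∈ range (n + 1), (k * (n.choose k) ^ 2 + (n - k) * (n.choose k) ^ 2) := by
    rw [Finset.sum_add_distrib, ← hrefl]; ring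
  rw [key]
  have key2 : ∑ k ∈ range (n + 1), (k * (n.choose k) ^ 2 + (n - k) * (n.choose k) ^ 2)
      = ∑ k ∈ range (n + 1), n * (n.choose k) ^ 2 := by
    refine Finset.sum_congr rfl fun k hk => ?_
    rw [Finset.mem_range] at hk
    rw [← add_mul]
    congr 1
    omega
  rw [key2, ← Finset.mul_sum, sum_choose_sq]

theorem stmt_13 (m : ℕ) (hm : 1 ≤ m) :
    4 * (2 * m - 1) * ∑ x ∈ Finset.Icc 1 m, x ^ 3 * (Nat.choose m x) ^ 2 =
      m ^ 3 * (m + 1) * Nat.choose (2 * m) m := by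
  obtain ⟨n, rfl⟩ : ∃ n, m = n + 1 := ⟨m - 1, by omega⟩
  have hsum : ∑ x ∈ Finset.Icc 1 (n + 1), x ^ 3 * ((n + 1).choose x) ^ 2
      = ∑ k ∈ range (n + 1), (k + 1) ^ 3 * ((n + 1).choose (k + 1)) ^ 2 := by
    rw [show Finset.Icc 1 (n + 1) = Finset.Ico 1 (n + 2) by
      ext x; simp [Nat.lt_succ_iff], Finset.sum_Ico_eq_sum_range]
    simp [add_comm 1]
  rw [hsum]
  have hterm : ∀ k, (k + 1) ^ 3 * ((n + 1).choose (k + 1)) ^ 2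
      = (n + 1) ^ 2 * ((k + 1) * (n.choose k) ^ 2) := by
    intro k
    have h := Nat.add_one_mul_choose_eq n k
    have hsq : ((k + 1) * (n + 1).choose (k + 1)) ^ 2 = ((n + 1) * n.choose k) ^ 2 := by
      rw [mul_comm (k + 1), h]
    nlinarith [hsq]
  simp_rw [hterm]
  rw [← Finset.mul_sum]
  have hsplit : ∑ k ∈ range (n + 1), (k + 1) * (n.choose k) ^ 2
      = (∑ k ∈ range (n + 1), k * (n.choose k) ^ 2)
        + ∑ k ∈ range (n + 1), (n.choose k) ^ 2 := by
    rw [← Finset.sum_add_distrib]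
    exact Finset.sum_congr rfl fun k _ => by ring
  have h1 := two_mul_sum_k_choose_sq n
  have h2 := sum_choose_sq n
  have h3 := Nat.succ_mul_centralBinom_succ n
  rw [Nat.centralBinom, Nat.centralBinom] at h3
  have h2S : 2 * ∑ k ∈ range (n + 1), (k + 1) * (n.choose k) ^ 2
      = (n + 2) * (2 * n).choose n := by
    rw [hsplit]; linarith [h1, h2]
  have e1 : 2 * (n + 1) - 1 = 2 * n + 1 := by omega
  have e2 : 2 * (n + 1) = 2 * (n + 1) := rfl
  rw [e1]
  set S := ∑ k ∈ range (n + 1), (k + 1) * (n.choose k) ^ 2 with hS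
  set C := (2 * n).choose n with hC
  set D := (2 * (n + 1)).choose (n + 1) with hD
  zify at h2S h3 ⊢
  linear_combination (2 * (2 * (n:ℤ) + 1) * (n + 1) ^ 2) * h2S
    - ((n + 1) ^ 2 * ((n:ℤ) + 2)) * h3
end

section
/- Let x ∈ {0,1}^n be a binary sequence of length n containing exactly n0 ≥ 1 zeros and n1 ≥ 1 ones. Define r_i := |{j : x_j ≤ x_i}| and l_i := |{j : x_j ≥ x_i}| for i ∈ {1,…,n}. Then Chatterjee's coefficient computed on x satisfies 1 − (n · Σ_{i=1}^{n−1} |r_{i+1} − r_i|) / (2 · Σ_{i=1}^{n} l_i · (n − l_i)) = 1 − (n / (2 · n0 · n1)) · τ(x), where τ(x) := |{i ∈ {1,…,n−1} : x_i ≠ x_{i+1}}| is the number of jumps in x. -/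
/-- `r_i = |{j : x_j ≤ x_i}|` for a binary sequence `x ∈ {0,1}^n` (with `false < true`). -/
def rcount {n : ℕ} (x : Fin n → Bool) (i : Fin n) : ℕ :=
  (Finset.univ.filter (fun j : Fin n => x j ≤ x i)).card

/-- `l_i = |{j : x_j ≥ x_i}|` for a binary sequence `x ∈ {0,1}^n` (with `false < true`). -/
def lcount {n : ℕ} (x : Fin n → Bool) (i : Fin n) : ℕ :=
  (Finset.univ.filter (fun j : Fin n => x i ≤ x j)).card

theorem stmt_16 (n n0 n1 : ℕ) (h0 : 1 ≤ n0) (h1 : 1 ≤ n1) (x : Fin n → Bool)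
    (hx0 : (Finset.univ.filter (fun i => x i = false)).card = n0)
    (hx1 : (Finset.univ.filter (fun i => x i = true)).card = n1) :
    1 - ((n : ℝ) * ∑ i : Fin n, if h : (i : ℕ) + 1 < n then
          (((rcount x ⟨(i : ℕ) + 1, h⟩ : ℤ) - (rcount x i : ℤ)).natAbs : ℝ) else 0) /
        (2 * ∑ i : Fin n, ((lcount x i : ℝ) * ((n : ℝ) - (lcount x i : ℝ)))) =
      1 - ((n : ℝ) / (2 * (n0 : ℝ) * (n1 : ℝ))) * (tau x : ℝ) := by
  have hn : n0 + n1 = n := by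
    have h2 := Finset.card_filter_add_card_filter_not
      (s := (Finset.univ : Finset (Fin n))) (p := fun i => x i = false)
    simp only [Bool.not_eq_false, Finset.card_univ, Fintype.card_fin] at h2
    omega
  -- rcount values
  have hrf : ∀ i : Fin n, x i = false → rcount x i = n0 := by
    intro i hi
    rw [rcount, ← hx0]
    congr 1
    apply Finset.filter_congr
    intro j _
    cases hj : x j <;> simp [hi, hj]
  have hrt : ∀ i : Fin n, x i = true → rcount x i = n := by
    intro i hi
    rw [rcount]
    simp [hi]
  have hlf : ∀ i : Fin n, x i = false → lcount x i = n := by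
    intro i hi
    rw [lcount]
    simp [hi]
  have hlt : ∀ i : Fin n, x i = true → lcount x i = n1 := by
    intro i hi
    rw [lcount, ← hx1]
    congr 1
    apply Finset.filter_congr
    intro j _
    cases hj : x j <;> simp [hi, hj]
  -- numerator
  have hnum : (∑ i : Fin n, if h : (i : ℕ) + 1 < n then
      (((rcount x ⟨(i : ℕ) + 1, h⟩ : ℤ) - (rcount x i : ℤ)).natAbs : ℝ) else 0)
      = (n1 : ℝ) * (tau x : ℝ) := by
    have : ∀ i : Fin n, (if h : (i : ℕ) + 1 < n then
        (((rcount x ⟨(i : ℕ) + 1, h⟩ : ℤ) - (rcount x i : ℤ)).natAbs : ℝ) else 0)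
        = if (∃ h : (i : ℕ) + 1 < n, x i ≠ x ⟨(i : ℕ) + 1, h⟩) then (n1 : ℝ) else 0 := by
      intro i
      by_cases h : (i : ℕ) + 1 < n
      · rw [dif_pos h]
        by_cases hne : x i ≠ x ⟨(i : ℕ) + 1, h⟩
        · rw [if_pos ⟨h, hne⟩]
          cases hxi : x i <;> cases hxi' : x ⟨(i : ℕ) + 1, h⟩ <;>
            simp_all [hrf, hrt] <;>
            · congr 1
              rw [← hn]; push_cast; ring_nf; simp
        · rw [if_neg (by push_neg; push_neg at hne; intro _; exact hne)]
          push_neg at hne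
          simp [rcount, hne]
      · rw [dif_neg h, if_neg (by rintro ⟨h', _⟩; exact h h')]
    rw [Finset.sum_congr rfl (fun i _ => this i), Finset.sum_ite, Finset.sum_const,
      Finset.sum_const_zero, add_zero, tau, nsmul_eq_mul, mul_comm]
  -- denominator
  have hden : (∑ i : Fin n, ((lcount x i : ℝ) * ((n : ℝ) - (lcount x i : ℝ))))
      = (n1 : ℝ) * ((n1 : ℝ) * (n0 : ℝ)) := by
    have : ∀ i : Fin n, ((lcount x i : ℝ) * ((n : ℝ) - (lcount x i : ℝ)))
        = if x i = true then (n1 : ℝ) * (n0 : ℝ) else 0 := by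
      intro i
      cases hxi : x i
      · rw [hlf i hxi]; simp
      · rw [hlt i hxi, if_pos rfl]
        have : (n : ℝ) = (n0 : ℝ) + (n1 : ℝ) := by
          rw [← Nat.cast_add, hn]
        rw [this]; ring
    rw [Finset.sum_congr rfl (fun i _ => this i), Finset.sum_ite, Finset.sum_const,
      Finset.sum_const_zero, add_zero, hx1, nsmul_eq_mul]
  rw [hnum, hden]
  have hn0 : (n0 : ℝ) ≠ 0 := by positivity
  have hn1 : (n1 : ℝ) ≠ 0 := by positivity
  congr 1
  field_simp
end
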